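/- For a > 0 and n >= 1, the polynomial R_n(x) = (1/sqrt(a^2+1)) ( sqrt(a^2+1) x U_{n-1}(x) + a T_n(x) ) satisfies sgn(R_n(cos(k*pi/n))) = (-1)^k for every integer k with 0 <= k <= n; consequently R_n has at least n distinct zeros in the open interval (-1,1), one in each interval (cos((k+1)pi/n), cos(k pi/n)). -/
import Mathlib

open Polynomial Real

lemma U_eval_one' (m : ℕ) : (Polynomial.Chebyshev.U ℝ (m : ℤ)).eval 1 = m + 1 := by
  induction m using Nat.twoStepInduction with
  | zero => simp [Polynomial.Chebyshev.U_zero]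
  | one => norm_num [Polynomial.Chebyshev.U_one]
  | more m ih1 ih2 =>
    have h : ((m + 2 : ℕ) : ℤ) = (m : ℤ) + 2 := by push_cast; ring
    rw [h, Polynomial.Chebyshev.U_add_two]
    have h1 : ((m + 1 : ℕ) : ℤ) = (m : ℤ) + 1 := by push_cast; ring
    rw [h1] at ih2
    simp only [eval_sub, eval_mul, eval_ofNat, eval_X, ih2, ih1]
    push_cast; ring

lemma U_eval_neg_one' (m : ℕ) :
    (Polynomial.Chebyshev.U ℝ (m : ℤ)).eval (-1) = (-1) ^ m * (m + 1) := by
  induction m using Nat.twoStepInduction with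
  | zero => simp [Polynomial.Chebyshev.U_zero]
  | one => norm_num [Polynomial.Chebyshev.U_one]
  | more m ih1 ih2 =>
    have h : ((m + 2 : ℕ) : ℤ) = (m : ℤ) + 2 := by push_cast; ring
    rw [h, Polynomial.Chebyshev.U_add_two]
    have h1 : ((m + 1 : ℕ) : ℤ) = (m : ℤ) + 1 := by push_cast; ring
    rw [h1] at ih2
    simp only [eval_sub, eval_mul, eval_ofNat, eval_X, ih2, ih1]
    push_cast; ring

lemma key_pos (a : ℝ) (ha : 0 < a) (n : ℕ) (hn : 1 ≤ n) (k : ℕ) (hk : k ≤ n) :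
    0 < (-1 : ℝ) ^ k * ((1 / Real.sqrt (a ^ 2 + 1)) *
        (Real.sqrt (a ^ 2 + 1) * Real.cos (k * Real.pi / n) *
            (Polynomial.Chebyshev.U ℝ ((n : ℤ) - 1)).eval (Real.cos (k * Real.pi / n)) +
          a * (Polynomial.Chebyshev.T ℝ (n : ℤ)).eval (Real.cos (k * Real.pi / n)))) := by
  have hs : 0 < Real.sqrt (a ^ 2 + 1) := Real.sqrt_pos.mpr (by positivity)
  have hn0 : (n : ℝ) ≠ 0 := by positivity
  have hidx : ((n : ℤ) - 1) = ((n - 1 : ℕ) : ℤ) := by omega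
  have hnn : ((n - 1 : ℕ) : ℝ) + 1 = (n : ℝ) := by
    push_cast [Nat.cast_sub hn]; ring
  rcases Nat.eq_zero_or_pos k with rfl | hk0
  · -- k = 0
    simp only [Nat.cast_zero, zero_mul, zero_div, Real.cos_zero, pow_zero, one_mul]
    rw [hidx, U_eval_one', hnn]
    have hT : (Polynomial.Chebyshev.T ℝ (n : ℤ)).eval 1 = 1 := by
      have := Polynomial.Chebyshev.T_real_cos 0 (n : ℤ)
      simpa using this
    rw [hT]
    have : 0 < Real.sqrt (a ^ 2 + 1) * 1 * n + a * 1 := by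
      have : (1 : ℝ) ≤ (n : ℝ) := by exact_mod_cast hn
      nlinarith
    positivity
  rcases eq_or_lt_of_le hk with rfl | hkn
  · -- k = n
    have hθ : (k : ℝ) * Real.pi / k = Real.pi := by field_simp
    rw [hθ, Real.cos_pi]
    rw [hidx, U_eval_neg_one', hnn]
    have hT : (Polynomial.Chebyshev.T ℝ (k : ℤ)).eval (-1) = (-1) ^ k := by
      have h1 := Polynomial.Chebyshev.T_real_cos Real.pi (k : ℤ)
      rw [Real.cos_pi] at h1
      rw [h1]
      have := Real.cos_nat_mul_pi_sub 0 k
      simpa using this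
    rw [hT]
    have hposn : (0:ℝ) < Real.sqrt (a^2+1) * k + a := by
      have : (1 : ℝ) ≤ (k : ℝ) := by exact_mod_cast hn
      nlinarith
    have hexp : Real.sqrt (a^2+1) * (-1) * ((-1)^(k-1) * k) + a * (-1)^k
        = (-1)^k * (Real.sqrt (a^2+1) * k + a) := by
      have : ((-1:ℝ)) * (-1)^(k-1) = (-1)^k := by
        rw [← pow_succ']
        congr 1; omega
      nlinarith [this]
    rw [hexp]
    have h2 : (-1:ℝ)^k * ((-1:ℝ)^k) = 1 := by
      rw [← pow_add]; exact Even.neg_one_pow ⟨k, by ring⟩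
    calc (0:ℝ) < (1/Real.sqrt (a^2+1)) * (Real.sqrt (a^2+1) * k + a) := by positivity
      _ = (-1)^k * (1/Real.sqrt (a^2+1) * ((-1)^k * (Real.sqrt (a^2+1)*k + a))) := by
          rw [show (-1:ℝ)^k * (1/Real.sqrt (a^2+1) * ((-1)^k * (Real.sqrt (a^2+1)*k + a)))
            = ((-1:ℝ)^k * (-1:ℝ)^k) * (1/Real.sqrt (a^2+1) * (Real.sqrt (a^2+1)*k + a)) by ring,
            h2, one_mul]
  · -- 0 < k < n
    set θ := (k : ℝ) * Real.pi / n with hθdef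
    have hθ0 : 0 < θ := by
      apply div_pos (mul_pos (by exact_mod_cast hk0) Real.pi_pos) (by positivity)
    have hθπ : θ < Real.pi := by
      rw [hθdef, div_lt_iff₀ (by positivity : (0:ℝ) < (n:ℝ))]
      have : (k : ℝ) < n := by exact_mod_cast hkn
      nlinarith [Real.pi_pos]
    have hsinθ : 0 < Real.sin θ := Real.sin_pos_of_pos_of_lt_pi hθ0 hθπ
    have hnθ : (n : ℝ) * θ = k * Real.pi := by
      rw [hθdef]; field_simp
    have hU : (Polynomial.Chebyshev.U ℝ ((n:ℤ)-1)).eval (Real.cos θ) = 0 := by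
      have h1 := Polynomial.Chebyshev.U_real_cos θ ((n:ℤ) - 1)
      have h2 : (((n:ℤ) - 1 : ℤ) : ℝ) + 1 = (n : ℝ) := by push_cast; ring
      rw [h2, hnθ, Real.sin_nat_mul_pi] at h1
      exact (mul_eq_zero.mp h1).resolve_right hsinθ.ne'
    have hT : (Polynomial.Chebyshev.T ℝ (n:ℤ)).eval (Real.cos θ) = (-1)^k := by
      rw [Polynomial.Chebyshev.T_real_cos]
      push_cast
      rw [hnθ]
      have := Real.cos_nat_mul_pi_sub 0 k
      simpa using this
    rw [hU, hT]
    have h2 : (-1:ℝ)^k * ((-1:ℝ)^k) = 1 := by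
      rw [← pow_add]; exact Even.neg_one_pow ⟨k, by ring⟩
    calc (0:ℝ) < (1/Real.sqrt (a^2+1)) * a := by positivity
      _ = (-1)^k * (1/Real.sqrt (a^2+1) *
            (Real.sqrt (a^2+1) * Real.cos θ * 0 + a * (-1)^k)) := by
          rw [mul_zero, zero_add,
            show (-1:ℝ)^k * (1/Real.sqrt (a^2+1) * (a * (-1)^k))
              = ((-1:ℝ)^k * (-1:ℝ)^k) * (1/Real.sqrt (a^2+1) * a) by ring, h2, one_mul]


theorem stmt5 (a : ℝ) (ha : 0 < a) (n : ℕ) (hn : 1 ≤ n) :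
    (∀ k : ℕ, k ≤ n →
      Real.sign ((1 / Real.sqrt (a ^ 2 + 1)) *
        (Real.sqrt (a ^ 2 + 1) * Real.cos (k * Real.pi / n) *
            (Polynomial.Chebyshev.U ℝ ((n : ℤ) - 1)).eval (Real.cos (k * Real.pi / n)) +
          a * (Polynomial.Chebyshev.T ℝ (n : ℤ)).eval (Real.cos (k * Real.pi / n)))) =
        (-1 : ℝ) ^ k) ∧
    (∀ k : ℕ, k < n →
      ∃ x ∈ Set.Ioo (Real.cos ((k + 1) * Real.pi / n)) (Real.cos (k * Real.pi / n)),
        (1 / Real.sqrt (a ^ 2 + 1)) *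
          (Real.sqrt (a ^ 2 + 1) * x * (Polynomial.Chebyshev.U ℝ ((n : ℤ) - 1)).eval x +
            a * (Polynomial.Chebyshev.T ℝ (n : ℤ)).eval x) = 0) := by
  set f : ℝ → ℝ := fun x =>
    (1 / Real.sqrt (a ^ 2 + 1)) *
      (Real.sqrt (a ^ 2 + 1) * x * (Polynomial.Chebyshev.U ℝ ((n : ℤ) - 1)).eval x +
        a * (Polynomial.Chebyshev.T ℝ (n : ℤ)).eval x) with hf
  have key : ∀ k : ℕ, k ≤ n → 0 < (-1:ℝ)^k * f (Real.cos (k * Real.pi / n)) :=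
    fun k hk => key_pos a ha n hn k hk
  constructor
  · intro k hk
    have h := key k hk
    rcases Nat.even_or_odd k with he | ho
    · rw [he.neg_one_pow, one_mul] at h
      rw [he.neg_one_pow]
      exact Real.sign_of_pos h
    · rw [ho.neg_one_pow, neg_one_mul, neg_pos] at h
      rw [ho.neg_one_pow]
      exact Real.sign_of_neg h
  · intro k hk
    have hc : Continuous f := by
      apply continuous_const.mul
      exact ((continuous_const.mul continuous_id).mul
        (Polynomial.Chebyshev.U ℝ ((n : ℤ) - 1)).continuous).add
        (continuous_const.mul (Polynomial.Chebyshev.T ℝ (n : ℤ)).continuous)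
    have hq := key k (le_of_lt hk)
    have hp := key (k + 1) hk
    have hcast : ((k + 1 : ℕ) : ℝ) = (k : ℝ) + 1 := by push_cast; ring
    rw [hcast] at hp
    have hab : Real.cos ((k + 1) * Real.pi / n) < Real.cos (k * Real.pi / n) := by
      apply Real.cos_lt_cos_of_nonneg_of_le_pi
      · positivity
      · rw [div_le_iff₀ (by positivity : (0:ℝ) < (n:ℝ))]
        have : ((k:ℝ) + 1) ≤ n := by exact_mod_cast hk
        nlinarith [Real.pi_pos]
      · rw [div_lt_div_iff₀ (by positivity : (0:ℝ) < (n:ℝ)) (by positivity : (0:ℝ) < (n:ℝ))]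
        nlinarith [mul_pos Real.pi_pos (show (0:ℝ) < (n:ℝ) by positivity)]
    set p := Real.cos ((k + 1) * Real.pi / n)
    set q := Real.cos (k * Real.pi / n)
    rcases Nat.even_or_odd k with he | ho
    · rw [he.neg_one_pow, one_mul] at hq
      rw [pow_succ, he.neg_one_pow, one_mul, neg_one_mul, neg_pos] at hp
      have := intermediate_value_Ioo (le_of_lt hab) hc.continuousOn (⟨hp, hq⟩ : (0:ℝ) ∈ Set.Ioo (f p) (f q))
      obtain ⟨x, hx, hfx⟩ := this
      exact ⟨x, hx, hfx⟩
    · rw [ho.neg_one_pow, neg_one_mul, neg_pos] at hq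
      rw [pow_succ, ho.neg_one_pow, neg_one_mul, neg_neg, one_mul] at hp
      have := intermediate_value_Ioo' (le_of_lt hab) hc.continuousOn (⟨hq, hp⟩ : (0:ℝ) ∈ Set.Ioo (f q) (f p))
      obtain ⟨x, hx, hfx⟩ := this
      exact ⟨x, hx, hfx⟩
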